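/- Define the genus-4 Schur–Weierstraß polynomial S(u₁,u₂,u₃,u₄) = u₄¹⁰/4725 − u₄⁷u₃/105 + u₂u₄⁵/15 − u₄u₃³ − u₄³u₁/3 + u₂u₃u₄² − u₂² + u₁u₃, and set Z(z) = (z⁷/7, z⁵/5, z³/3, z). Then for all complex z: S(Z(z)) = 0, (∂S/∂u₄)(Z(z)) = 0, and (∂²S/∂u₄²)(Z(z)) = 0. -/

import Mathlib

/-- The genus-4 Schur–Weierstraß polynomial. -/
noncomputable def S4 (u₁ u₂ u₃ u₄ : ℂ) : ℂ :=
  u₄ ^ 10 / 4725 - u₄ ^ 7 * u₃ / 105 + u₂ * u₄ ^ 5 / 15 - u₄ * u₃ ^ 3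
    - u₄ ^ 3 * u₁ / 3 + u₂ * u₃ * u₄ ^ 2 - u₂ ^ 2 + u₁ * u₃

private lemma S4_d1 (a b c : ℂ) : deriv (fun u => S4 a b c u) =
    fun u => 10 * u ^ 9 / 4725 - 7 * u ^ 6 * c / 105 + b * (5 * u ^ 4) / 15 - c ^ 3
      - 3 * u ^ 2 * a / 3 + b * c * (2 * u) := by
  funext u
  have h : HasDerivAt (fun u : ℂ => S4 a b c u)
      (10 * u ^ 9 / 4725 - 7 * u ^ 6 * c / 105 + b * (5 * u ^ 4) / 15 - c ^ 3
      - 3 * u ^ 2 * a / 3 + b * c * (2 * u)) u := by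
    unfold S4
    have h1 : HasDerivAt (fun u : ℂ => u) 1 u := hasDerivAt_id u
    have p10 := (hasDerivAt_pow 10 u).div_const (4725 : ℂ)
    have p7 := ((hasDerivAt_pow 7 u).mul_const c).div_const (105 : ℂ)
    have p5 := ((hasDerivAt_pow 5 u).const_mul b).div_const (15 : ℂ)
    have p1 := h1.mul_const (c ^ 3)
    have p3 := (hasDerivAt_pow 3 u).mul_const a |>.div_const (3 : ℂ)
    have p2 := (hasDerivAt_pow 2 u).const_mul (b * c)
    have := ((((((p10.sub p7).add p5).sub p1).sub p3).add p2).sub_const (b ^ 2)).add_const (a * c)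
    refine this.congr_deriv ?_
    push_cast
    ring
  exact h.deriv

private lemma S4_d2 (a b c u : ℂ) :
    deriv (fun u => 10 * u ^ 9 / 4725 - 7 * u ^ 6 * c / 105 + b * (5 * u ^ 4) / 15 - c ^ 3
      - 3 * u ^ 2 * a / 3 + b * c * (2 * u)) u =
    90 * u ^ 8 / 4725 - 42 * u ^ 5 * c / 105 + b * (20 * u ^ 3) / 15
      - 6 * u * a / 3 + b * c * 2 := by
  have h : HasDerivAt (fun u : ℂ => 10 * u ^ 9 / 4725 - 7 * u ^ 6 * c / 105
      + b * (5 * u ^ 4) / 15 - c ^ 3 - 3 * u ^ 2 * a / 3 + b * c * (2 * u))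
      (90 * u ^ 8 / 4725 - 42 * u ^ 5 * c / 105 + b * (20 * u ^ 3) / 15
      - 6 * u * a / 3 + b * c * 2) u := by
    have h1 : HasDerivAt (fun u : ℂ => u) 1 u := hasDerivAt_id u
    have p9 := ((hasDerivAt_pow 9 u).const_mul (10 : ℂ)).div_const (4725 : ℂ)
    have p6 := (((hasDerivAt_pow 6 u).const_mul (7 : ℂ)).mul_const c).div_const (105 : ℂ)
    have p4 := (((hasDerivAt_pow 4 u).const_mul (5 : ℂ)).const_mul b).div_const (15 : ℂ)
    have p2 := ((h1.const_mul (2 : ℂ)).const_mul (b * c))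
    have p2' := (((hasDerivAt_pow 2 u).const_mul (3 : ℂ)).mul_const a).div_const (3 : ℂ)
    have h' := ((((p9.sub p6).add p4).sub_const (c ^ 3)).sub p2').add p2
    refine h'.congr_deriv ?_
    push_cast
    ring
  exact h.deriv

theorem genus4_schur_vanishing (z : ℂ) :
    S4 (z ^ 7 / 7) (z ^ 5 / 5) (z ^ 3 / 3) z = 0 ∧
    deriv (fun u₄ => S4 (z ^ 7 / 7) (z ^ 5 / 5) (z ^ 3 / 3) u₄) z = 0 ∧
    iteratedDeriv 2 (fun u₄ => S4 (z ^ 7 / 7) (z ^ 5 / 5) (z ^ 3 / 3) u₄) z = 0 := by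
  refine ⟨?_, ?_, ?_⟩
  · unfold S4; ring
  · rw [S4_d1]; ring
  · rw [iteratedDeriv_succ, iteratedDeriv_one, S4_d1, S4_d2]
    ring
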